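/- For every x ∈ B one has E·(x⊗1) = E·(1⊗S_B(x)), where the products are taken in the tensor product algebra B⊗C. -/

import Mathlib

open scoped TensorProduct

/-- `ψ ⊗ id` followed by the identification `ℂ ⊗ N ≅ N`. -/
noncomputable def contrL {M N : Type*}
    [AddCommGroup M] [Module ℂ M] [AddCommGroup N] [Module ℂ N]
    (ψ : M →ₗ[ℂ] ℂ) : M ⊗[ℂ] N →ₗ[ℂ] N :=
  (TensorProduct.lid ℂ N).toLinearMap ∘ₗ TensorProduct.map ψ LinearMap.id

/-- `id ⊗ g` followed by the identification `M ⊗ ℂ ≅ M`. -/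
noncomputable def contrR {M N : Type*}
    [AddCommGroup M] [Module ℂ M] [AddCommGroup N] [Module ℂ N]
    (g : N →ₗ[ℂ] ℂ) : M ⊗[ℂ] N →ₗ[ℂ] M :=
  (TensorProduct.rid ℂ M).toLinearMap ∘ₗ TensorProduct.map LinearMap.id g

@[simp] lemma contrL_tmul {M N : Type*}
    [AddCommGroup M] [Module ℂ M] [AddCommGroup N] [Module ℂ N]
    (ψ : M →ₗ[ℂ] ℂ) (m : M) (n : N) :
    contrL ψ (m ⊗ₜ[ℂ] n) = ψ m • n := by
  simp [contrL]

@[simp] lemma contrR_tmul {M N : Type*}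
    [AddCommGroup M] [Module ℂ M] [AddCommGroup N] [Module ℂ N]
    (g : N →ₗ[ℂ] ℂ) (m : M) (n : N) :
    contrR g (m ⊗ₜ[ℂ] n) = g n • m := by
  simp [contrR]

lemma biform_comm {M N : Type*}
    [AddCommGroup M] [Module ℂ M] [AddCommGroup N] [Module ℂ N]
    (ψ : M →ₗ[ℂ] ℂ) (g : N →ₗ[ℂ] ℂ) (D : M ⊗[ℂ] N) :
    ψ (contrR g D) = g (contrL ψ D) := by
  induction D using TensorProduct.induction_on with
  | zero => simp
  | tmul m n => simp [mul_comm]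
  | add x y hx hy => simp [hx, hy]

lemma eq_zero_of_contrR_eq_zero {M N : Type*}
    [AddCommGroup M] [Module ℂ M] [AddCommGroup N] [Module ℂ N]
    (D : M ⊗[ℂ] N) (h : ∀ g : N →ₗ[ℂ] ℂ, contrR g D = 0) : D = 0 := by
  classical
  let b := Module.Basis.ofVectorSpace ℂ N
  let e : M ⊗[ℂ] N ≃ₗ[ℂ] (Module.Basis.ofVectorSpaceIndex ℂ N →₀ M) :=
    (LinearEquiv.lTensor M b.repr) ≪≫ₗ
      (TensorProduct.finsuppScalarRight ℂ ℂ M (Module.Basis.ofVectorSpaceIndex ℂ N))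
  have key : ∀ (D : M ⊗[ℂ] N) (i), e D i = contrR (b.coord i) D := by
    intro D i
    induction D using TensorProduct.induction_on with
    | zero => simp
    | tmul m n =>
        simp [e, TensorProduct.finsuppScalarRight_apply_tmul_apply,
          Module.Basis.coord_apply]
    | add x y hx hy => simp [map_add, hx, hy]
  have : e D = 0 := by
    ext i
    rw [key]
    simp [h]
  simpa using e.map_eq_zero_iff.mp this

lemma contrL_mul_right_tmul_one {B : Type*} [Ring B] [Algebra ℂ B]
    (ψ : B →ₗ[ℂ] ℂ) (T : B ⊗[ℂ] Bᵐᵒᵖ) (x : B) :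
    contrL ψ (T * (x ⊗ₜ[ℂ] (1 : Bᵐᵒᵖ))) =
      contrL (ψ ∘ₗ LinearMap.mulRight ℂ x) T := by
  induction T using TensorProduct.induction_on with
  | zero => simp
  | tmul m n => simp [Algebra.TensorProduct.tmul_mul_tmul]
  | add u v hu hv => simp [add_mul, hu, hv]

lemma contrL_mul_one_tmul {B : Type*} [Ring B] [Algebra ℂ B]
    (ψ : B →ₗ[ℂ] ℂ) (T : B ⊗[ℂ] Bᵐᵒᵖ) (c : Bᵐᵒᵖ) :
    contrL ψ (T * ((1 : B) ⊗ₜ[ℂ] c)) = (contrL ψ T) * c := by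
  induction T using TensorProduct.induction_on with
  | zero => simp
  | tmul m n => simp [Algebra.TensorProduct.tmul_mul_tmul, smul_mul_assoc]
  | add u v hu hv => simp [add_mul, hu, hv]

/-- With `C = Bᵐᵒᵖ`, `S_B(x) = xᵒᵖ`, `φ` a faithful functional with modular automorphism `σ`
and `E ∈ B⊗C` an idempotent with `(φ(·x)⊗id)(E) = S_B(x)` for all `x`, one has
`E·(x⊗1) = E·(1⊗S_B(x))` for all `x ∈ B`. -/
theorem stmt6 {B : Type*} [Ring B] [Algebra ℂ B]
    (φ : B →ₗ[ℂ] ℂ)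
    (hf1 : ∀ x : B, (∀ b : B, φ (x * b) = 0) → x = 0)
    (hf2 : ∀ x : B, (∀ b : B, φ (b * x) = 0) → x = 0)
    (σ : B ≃ₐ[ℂ] B)
    (hmod : ∀ x₁ x₂ : B, φ (x₁ * x₂) = φ (x₂ * σ x₁))
    (E : B ⊗[ℂ] Bᵐᵒᵖ)
    (hEidem : E * E = E)
    (hsep : ∀ x : B,
      contrL (φ ∘ₗ LinearMap.mulRight ℂ x) E = MulOpposite.op x) :
    ∀ x : B,
      E * (x ⊗ₜ[ℂ] (1 : Bᵐᵒᵖ)) = E * ((1 : B) ⊗ₜ[ℂ] MulOpposite.op x) := by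
  intro x
  set D : B ⊗[ℂ] Bᵐᵒᵖ :=
    E * (x ⊗ₜ[ℂ] (1 : Bᵐᵒᵖ)) - E * ((1 : B) ⊗ₜ[ℂ] MulOpposite.op x) with hD
  have hcontr : ∀ b : B, contrL (φ ∘ₗ LinearMap.mulRight ℂ b) D = 0 := by
    intro b
    have h1 : contrL (φ ∘ₗ LinearMap.mulRight ℂ b) (E * (x ⊗ₜ[ℂ] (1 : Bᵐᵒᵖ)))
        = MulOpposite.op (x * b) := by
      rw [contrL_mul_right_tmul_one]
      have : (φ ∘ₗ LinearMap.mulRight ℂ b) ∘ₗ LinearMap.mulRight ℂ x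
          = φ ∘ₗ LinearMap.mulRight ℂ (x * b) := by
        ext y; simp [mul_assoc]
      rw [this, hsep]
    have h2 : contrL (φ ∘ₗ LinearMap.mulRight ℂ b)
        (E * ((1 : B) ⊗ₜ[ℂ] MulOpposite.op x)) = MulOpposite.op (x * b) := by
      rw [contrL_mul_one_tmul, hsep]
      simp [← MulOpposite.op_mul]
    rw [hD, map_sub, h1, h2, sub_self]
  have hzero : D = 0 := by
    apply eq_zero_of_contrR_eq_zero
    intro g
    apply hf1
    intro b
    have := biform_comm (φ ∘ₗ LinearMap.mulRight ℂ b) g D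
    rw [hcontr b, map_zero] at this
    simpa using this
  have := sub_eq_zero.mp hzero
  exact this
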